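/- Suppose M : [0,l] → ℝ is differentiable, takes values in (0,1), and solves dM/dx = μ(γ+1)M³/(2(1−M²)) on [0,l] with M(0) = M₀ and M(l) = M₁, where γ > 1 and μ > 0. Then l = (1/M₀² − 1/M₁² + ln M₀² − ln M₁²)/(μ(γ+1)). -/

import Mathlib

theorem fanno_duct_length_formula
    (γ μ l M₀ M₁ : ℝ) (hγ : 1 < γ) (hμ : 0 < μ) (hl : 0 ≤ l)
    (M : ℝ → ℝ)
    (hrange : ∀ x ∈ Set.Icc 0 l, M x ∈ Set.Ioo (0 : ℝ) 1)
    (hode : ∀ x ∈ Set.Icc 0 l,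
      HasDerivAt M (μ * (γ + 1) * (M x) ^ 3 / (2 * (1 - (M x) ^ 2))) x)
    (h0 : M 0 = M₀) (h1 : M l = M₁) :
    l = (1 / M₀ ^ 2 - 1 / M₁ ^ 2 + Real.log (M₀ ^ 2) - Real.log (M₁ ^ 2)) /
          (μ * (γ + 1)) := by
  have hcpos : 0 < μ * (γ + 1) := mul_pos hμ (by linarith)
  set c : ℝ := μ * (γ + 1) with hc
  set H : ℝ → ℝ := fun x => ((M x) ^ 2)⁻¹ + Real.log ((M x) ^ 2) + c * x with hH
  have key : ∀ x ∈ Set.Icc 0 l, HasDerivAt H 0 x := by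
    intro x hx
    obtain ⟨hm0, hm1⟩ := hrange x hx
    have hmne : M x ≠ 0 := ne_of_gt hm0
    have h1m : 1 - (M x) ^ 2 ≠ 0 := by nlinarith
    have hd := hode x hx
    have hsq : HasDerivAt (fun y => (M y) ^ 2)
        (2 * M x * (c * (M x) ^ 3 / (2 * (1 - (M x) ^ 2)))) x := by
      have := hd.fun_pow 2
      simpa [pow_one] using this
    have hinv := hsq.inv (pow_ne_zero 2 hmne)
    have hlog := hsq.log (pow_ne_zero 2 hmne)
    have hlin : HasDerivAt (fun y => c * y) c x := by simpa using (hasDerivAt_id x).const_mul c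
    have htot := (hinv.add hlog).add hlin
    refine htot.congr_deriv ?_
    field_simp
    ring
  have hcont : ContinuousOn H (Set.Icc 0 l) :=
    fun x hx => (key x hx).continuousAt.continuousWithinAt
  have hconst := constant_of_has_deriv_right_zero hcont
    (fun x hx => (key x (Set.mem_Icc_of_Ico hx)).hasDerivWithinAt)
  have hHl := hconst l (Set.right_mem_Icc.mpr hl)
  simp only [hH, h0, h1, mul_zero, add_zero] at hHl
  have hcne : c ≠ 0 := ne_of_gt hcpos
  field_simp
  field_simp at hHl
  linarith
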